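/- (Distribution-shift bound for visitation expectations) For any two policies π and π̃ of the fixed finite discounted MDP with π(s,a) > 0 and π̃(s,a) > 0 for all (s,a), and any function g : S × A → ℝ, ∑_s d^π(s) ∑_a π(s,a) g(s,a) ≤ ∑_s d^{π̃}(s) ∑_a π(s,a) g(s,a) + √2 γ (1−γ)^{-1} (max_{s,a} |g(s,a)|) √(D^{π̃}_KL(π, π̃)). -/

import Mathlib

open Finset

/-- Time-`t` state distribution of policy `π` in the MDP with transitions `P`
and initial distribution `μ`. -/
noncomputable def pDist {S A : Type*} [Fintype S] [Fintype A]
    (P : S → A → S → ℝ) (μ : S → ℝ) (π : S → A → ℝ) : ℕ → S → ℝ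
  | 0 => μ
  | t + 1 => fun s' => ∑ s, ∑ a, pDist P μ π t s * π s a * P s a s'

/-- Discounted state visitation distribution `d^π`. -/
noncomputable def dvisit {S A : Type*} [Fintype S] [Fintype A]
    (P : S → A → S → ℝ) (μ : S → ℝ) (γ : ℝ) (π : S → A → ℝ) (s : S) : ℝ :=
  (1 - γ) * ∑' t : ℕ, γ ^ t * pDist P μ π t s

/-- Discounted return `J_R(π)`. -/
noncomputable def Jret {S A : Type*} [Fintype S] [Fintype A]
    (P : S → A → S → ℝ) (μ : S → ℝ) (γ : ℝ) (R : S → A → ℝ) (π : S → A → ℝ) : ℝ :=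
  ∑' t : ℕ, γ ^ t * ∑ s, ∑ a, pDist P μ π t s * π s a * R s a

/-- Advantage function `A_R^π(s,a) = Q_R^π(s,a) - V_R^π(s)`, expressed in terms of
the value function `V` of the policy. -/
noncomputable def Adv {S A : Type*} [Fintype S]
    (P : S → A → S → ℝ) (γ : ℝ) (R : S → A → ℝ) (V : S → ℝ) (s : S) (a : A) : ℝ :=
  (R s a + γ * ∑ s', P s a s' * V s') - V s

/-- KL divergence between two distributions on a finite type. -/
noncomputable def KL {X : Type*} [Fintype X] (p q : X → ℝ) : ℝ :=
  ∑ x, p x * Real.log (p x / q x)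

/-- Total variation distance between two distributions on a finite type. -/
noncomputable def TV {X : Type*} [Fintype X] (p q : X → ℝ) : ℝ :=
  (1 / 2) * ∑ x, |p x - q x|

section basics
variable {S A : Type*} [Fintype S] [Fintype A]
  (P : S → A → S → ℝ) (μ : S → ℝ) (π : S → A → ℝ)
  (hP0 : ∀ s a s', 0 ≤ P s a s') (hP1 : ∀ s a, ∑ s', P s a s' = 1)
  (hμ0 : ∀ s, 0 ≤ μ s) (hμ1 : ∑ s, μ s = 1)
  (hπ0 : ∀ s a, 0 ≤ π s a) (hπ1 : ∀ s, ∑ a, π s a = 1)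

include hP0 hμ0 hπ0 in
lemma pDist_nonneg : ∀ t s, 0 ≤ pDist P μ π t s := by
  intro t
  induction t with
  | zero => exact hμ0
  | succ t ih =>
    intro s'
    apply Finset.sum_nonneg; intro s _
    apply Finset.sum_nonneg; intro a _
    exact mul_nonneg (mul_nonneg (ih s) (hπ0 s a)) (hP0 s a s')

include hP1 hμ1 hπ1 in
lemma pDist_sum : ∀ t, ∑ s, pDist P μ π t s = 1 := by
  intro t
  induction t with
  | zero => exact hμ1
  | succ t ih =>
    show ∑ s', ∑ s, ∑ a, pDist P μ π t s * π s a * P s a s' = 1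
    rw [Finset.sum_comm]
    have : ∀ s ∈ Finset.univ (α := S), ∑ s', ∑ a, pDist P μ π t s * π s a * P s a s'
        = pDist P μ π t s := by
      intro s _
      rw [Finset.sum_comm]
      calc ∑ a, ∑ s', pDist P μ π t s * π s a * P s a s'
          = ∑ a, pDist P μ π t s * π s a * ∑ s', P s a s' := by
            simp [Finset.mul_sum]
        _ = pDist P μ π t s := by
            simp only [hP1, mul_one, ← Finset.mul_sum, hπ1]
    rw [Finset.sum_congr rfl this, ih]

end basics

lemma summable_geom_bound {γ : ℝ} (hγ0 : 0 ≤ γ) (hγ1 : γ < 1) {C : ℝ} {f : ℕ → ℝ}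
    (hf : ∀ t, |f t| ≤ C * γ ^ t) : Summable f := by
  apply Summable.of_norm_bounded ((summable_geometric_of_lt_one hγ0 hγ1).mul_left C)
  simpa using hf

section basics2
variable {S A : Type*} [Fintype S] [Fintype A]
  (P : S → A → S → ℝ) (μ : S → ℝ) (π : S → A → ℝ) {γ : ℝ}
  (hP0 : ∀ s a s', 0 ≤ P s a s') (hP1 : ∀ s a, ∑ s', P s a s' = 1)
  (hγ0 : 0 < γ) (hγ1 : γ < 1)
  (hμ0 : ∀ s, 0 ≤ μ s) (hμ1 : ∑ s, μ s = 1)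
  (hπ0 : ∀ s a, 0 ≤ π s a) (hπ1 : ∀ s, ∑ a, π s a = 1)

include hP0 hP1 hμ0 hμ1 hπ0 hπ1 in
lemma pDist_le_one : ∀ t s, pDist P μ π t s ≤ 1 := by
  intro t s
  calc pDist P μ π t s ≤ ∑ s', pDist P μ π t s' :=
        Finset.single_le_sum (fun s' _ => pDist_nonneg P μ π hP0 hμ0 hπ0 t s') (Finset.mem_univ s)
    _ = 1 := pDist_sum P μ π hP1 hμ1 hπ1 t

include hP0 hP1 hγ0 hγ1 hμ0 hμ1 hπ0 hπ1 in
lemma summable_pDist (s : S) : Summable (fun t => γ ^ t * pDist P μ π t s) := by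
  apply summable_geom_bound hγ0.le hγ1 (C := 1)
  intro t
  rw [abs_mul, abs_of_nonneg (by positivity), one_mul,
    abs_of_nonneg (pDist_nonneg P μ π hP0 hμ0 hπ0 t s)]
  nlinarith [pDist_le_one P μ π hP0 hP1 hμ0 hμ1 hπ0 hπ1 t s, pow_nonneg hγ0.le t]

include hP0 hγ0 hμ0 hπ0 hγ1 in
lemma dvisit_nonneg (s : S) : 0 ≤ dvisit P μ γ π s := by
  apply mul_nonneg (by linarith)
  apply tsum_nonneg
  intro t
  exact mul_nonneg (by positivity) (pDist_nonneg P μ π hP0 hμ0 hπ0 t s)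

include hP0 hP1 hγ0 hγ1 hμ0 hμ1 hπ0 hπ1 in
lemma dvisit_sum : ∑ s, dvisit P μ γ π s = 1 := by
  have hsw : ∑' t : ℕ, ∑ s, γ ^ t * pDist P μ π t s
      = ∑ s, ∑' t : ℕ, γ ^ t * pDist P μ π t s :=
    Summable.tsum_finsetSum (fun s _ => summable_pDist P μ π hP0 hP1 hγ0 hγ1 hμ0 hμ1 hπ0 hπ1 s)
  unfold dvisit
  rw [← Finset.mul_sum, ← hsw]
  have : ∀ t : ℕ, ∑ s, γ ^ t * pDist P μ π t s = γ ^ t := by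
    intro t
    rw [← Finset.mul_sum, pDist_sum P μ π hP1 hμ1 hπ1 t, mul_one]
  simp only [this]
  rw [tsum_geometric_of_lt_one hγ0.le hγ1]
  field_simp
  exact div_self (by linarith)

end basics2

/-- Generic geometric recursion bound. -/
lemma geom_rec_bound {γ : ℝ} (hγ0 : 0 < γ) (hγ1 : γ < 1) {C : ℝ}
    {Δ ε : ℕ → ℝ} (hΔ0 : Δ 0 = 0) (hΔnn : ∀ t, 0 ≤ Δ t) (hεnn : ∀ t, 0 ≤ ε t)
    (hΔC : ∀ t, Δ t ≤ C) (hεC : ∀ t, ε t ≤ C)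
    (hrec : ∀ t, Δ (t + 1) ≤ Δ t + ε t) :
    (1 - γ) * ∑' t : ℕ, γ ^ t * Δ t ≤ γ * ∑' t : ℕ, γ ^ t * ε t := by
  have hb : ∀ (f : ℕ → ℝ), (∀ t, 0 ≤ f t) → (∀ t, f t ≤ C) →
      Summable (fun t => γ ^ t * f t) := by
    intro f h0 h1
    apply summable_geom_bound hγ0.le hγ1 (C := C)
    intro t
    rw [abs_mul, abs_of_nonneg (by positivity), abs_of_nonneg (h0 t)]
    calc γ ^ t * f t ≤ γ ^ t * C := by
          exact mul_le_mul_of_nonneg_left (h1 t) (by positivity)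
      _ = C * γ ^ t := mul_comm _ _
  have hsΔ := hb Δ hΔnn hΔC
  have hsε := hb ε hεnn hεC
  have hsΔ' : Summable (fun t => γ ^ t * Δ (t + 1)) := by
    apply summable_geom_bound hγ0.le hγ1 (C := C)
    intro t
    rw [abs_mul, abs_of_nonneg (by positivity), abs_of_nonneg (hΔnn (t+1))]
    calc γ ^ t * Δ (t+1) ≤ γ ^ t * C :=
          mul_le_mul_of_nonneg_left (hΔC (t+1)) (by positivity)
      _ = C * γ ^ t := mul_comm _ _
  set u := ∑' t : ℕ, γ ^ t * Δ t with hu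
  set e := ∑' t : ℕ, γ ^ t * ε t with he
  have h1 : u = γ * ∑' t : ℕ, γ ^ t * Δ (t + 1) := by
    rw [hu, Summable.tsum_eq_zero_add hsΔ]
    simp only [pow_zero, one_mul, hΔ0, zero_add, pow_succ]
    rw [← tsum_mul_left]
    congr 1; ext t; ring
  have h2 : ∑' t : ℕ, γ ^ t * Δ (t + 1) ≤ u + e := by
    rw [hu, he, ← Summable.tsum_add hsΔ hsε]
    apply Summable.tsum_le_tsum _ hsΔ' (hsΔ.add hsε)
    intro t
    have := hrec t
    nlinarith [pow_nonneg hγ0.le t]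
  nlinarith [(tsum_nonneg (fun t => mul_nonneg (pow_nonneg hγ0.le t) (hΔnn t) : ∀ t, 0 ≤ γ ^ t * Δ t) : 0 ≤ ∑' t : ℕ, γ ^ t * Δ t)]

section diffbound
variable {S A : Type*} [Fintype S] [Fintype A]
  (P : S → A → S → ℝ) (μ : S → ℝ) (π πt : S → A → ℝ) {γ : ℝ}
  (hP0 : ∀ s a s', 0 ≤ P s a s') (hP1 : ∀ s a, ∑ s', P s a s' = 1)
  (hγ0 : 0 < γ) (hγ1 : γ < 1)
  (hμ0 : ∀ s, 0 ≤ μ s) (hμ1 : ∑ s, μ s = 1)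
  (hπ0 : ∀ s a, 0 ≤ π s a) (hπ1 : ∀ s, ∑ a, π s a = 1)
  (hπt0 : ∀ s a, 0 ≤ πt s a) (hπt1 : ∀ s, ∑ a, πt s a = 1)

include hP0 hP1 hμ0 hπ0 hπ1 hπt0 in
lemma step_bound (t : ℕ) :
    ∑ s', |pDist P μ π (t+1) s' - pDist P μ πt (t+1) s'| ≤
      (∑ s, |pDist P μ π t s - pDist P μ πt t s|) +
      ∑ s, pDist P μ πt t s * ∑ a, |π s a - πt s a| := by
  have h1 : ∀ s', |pDist P μ π (t+1) s' - pDist P μ πt (t+1) s'| ≤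
      ∑ s, ∑ a, |pDist P μ π t s * π s a - pDist P μ πt t s * πt s a| * P s a s' := by
    intro s'
    show |(∑ s, ∑ a, pDist P μ π t s * π s a * P s a s') -
      ∑ s, ∑ a, pDist P μ πt t s * πt s a * P s a s'| ≤ _
    rw [← Finset.sum_sub_distrib]
    refine (Finset.abs_sum_le_sum_abs _ _).trans (Finset.sum_le_sum fun s _ => ?_)
    rw [← Finset.sum_sub_distrib]
    refine (Finset.abs_sum_le_sum_abs _ _).trans (Finset.sum_le_sum fun a _ => ?_)
    rw [← sub_mul, abs_mul, abs_of_nonneg (hP0 s a s')]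
  calc ∑ s', |pDist P μ π (t+1) s' - pDist P μ πt (t+1) s'|
      ≤ ∑ s', ∑ s, ∑ a, |pDist P μ π t s * π s a - pDist P μ πt t s * πt s a| * P s a s' :=
        Finset.sum_le_sum fun s' _ => h1 s'
    _ = ∑ s, ∑ a, |pDist P μ π t s * π s a - pDist P μ πt t s * πt s a| := by
        rw [Finset.sum_comm]
        refine Finset.sum_congr rfl fun s _ => ?_
        rw [Finset.sum_comm]
        refine Finset.sum_congr rfl fun a _ => ?_
        rw [← Finset.mul_sum, hP1, mul_one]
    _ ≤ ∑ s, ∑ a, (|pDist P μ π t s - pDist P μ πt t s| * π s a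
          + pDist P μ πt t s * |π s a - πt s a|) := by
        refine Finset.sum_le_sum fun s _ => Finset.sum_le_sum fun a _ => ?_
        have : pDist P μ π t s * π s a - pDist P μ πt t s * πt s a
            = (pDist P μ π t s - pDist P μ πt t s) * π s a
              + pDist P μ πt t s * (π s a - πt s a) := by ring
        rw [this]
        refine (abs_add_le _ _).trans ?_
        rw [abs_mul, abs_mul, abs_of_nonneg (hπ0 s a),
          abs_of_nonneg (pDist_nonneg P μ πt hP0 hμ0 hπt0 t s)]
    _ = (∑ s, |pDist P μ π t s - pDist P μ πt t s|) +
        ∑ s, pDist P μ πt t s * ∑ a, |π s a - πt s a| := by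
        rw [← Finset.sum_add_distrib]
        refine Finset.sum_congr rfl fun s _ => ?_
        rw [Finset.sum_add_distrib, ← Finset.mul_sum, ← Finset.mul_sum, hπ1, mul_one, mul_comm]

include hP0 hP1 hγ0 hγ1 hμ0 hμ1 hπ0 hπ1 hπt0 hπt1 in
lemma dvisit_diff_bound :
    ∑ s, |dvisit P μ γ π s - dvisit P μ γ πt s| ≤
      γ * (1 - γ)⁻¹ * ∑ s, dvisit P μ γ πt s * ∑ a, |π s a - πt s a| := by
  set Δ : ℕ → ℝ := fun t => ∑ s, |pDist P μ π t s - pDist P μ πt t s| with hΔdef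
  set ε : ℕ → ℝ := fun t => ∑ s, pDist P μ πt t s * ∑ a, |π s a - πt s a| with hεdef
  have hΔnn : ∀ t, 0 ≤ Δ t := fun t => Finset.sum_nonneg fun s _ => abs_nonneg _
  have hεnn : ∀ t, 0 ≤ ε t := fun t => Finset.sum_nonneg fun s _ =>
    mul_nonneg (pDist_nonneg P μ πt hP0 hμ0 hπt0 t s)
      (Finset.sum_nonneg fun a _ => abs_nonneg _)
  have hΔC : ∀ t, Δ t ≤ 2 := by
    intro t
    calc Δ t ≤ ∑ s, (pDist P μ π t s + pDist P μ πt t s) := by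
          refine Finset.sum_le_sum fun s _ => (abs_sub _ _).trans ?_
          rw [abs_of_nonneg (pDist_nonneg P μ π hP0 hμ0 hπ0 t s),
            abs_of_nonneg (pDist_nonneg P μ πt hP0 hμ0 hπt0 t s)]
      _ = 2 := by
          rw [Finset.sum_add_distrib, pDist_sum P μ π hP1 hμ1 hπ1,
            pDist_sum P μ πt hP1 hμ1 hπt1]; norm_num
  have hεC : ∀ t, ε t ≤ 2 := by
    intro t
    calc ε t ≤ ∑ s, pDist P μ πt t s * 2 := by
          refine Finset.sum_le_sum fun s _ => mul_le_mul_of_nonneg_left ?_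
            (pDist_nonneg P μ πt hP0 hμ0 hπt0 t s)
          calc ∑ a, |π s a - πt s a| ≤ ∑ a, (π s a + πt s a) := by
                refine Finset.sum_le_sum fun a _ => (abs_sub _ _).trans ?_
                rw [abs_of_nonneg (hπ0 s a), abs_of_nonneg (hπt0 s a)]
            _ = 2 := by rw [Finset.sum_add_distrib, hπ1, hπt1]; norm_num
      _ = 2 := by rw [← Finset.sum_mul, pDist_sum P μ πt hP1 hμ1 hπt1, one_mul]
  have hΔ0 : Δ 0 = 0 := by simp [hΔdef, pDist]
  have hrec : ∀ t, Δ (t + 1) ≤ Δ t + ε t :=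
    fun t => step_bound P μ π πt hP0 hP1 hμ0 hπ0 hπ1 hπt0 t
  have key := geom_rec_bound hγ0 hγ1 hΔ0 hΔnn hεnn hΔC hεC hrec
  -- relate LHS to (1-γ) * tsum
  have habs : ∀ s, |dvisit P μ γ π s - dvisit P μ γ πt s| ≤
      (1 - γ) * ∑' t : ℕ, γ ^ t * |pDist P μ π t s - pDist P μ πt t s| := by
    intro s
    have hsπ := summable_pDist P μ π hP0 hP1 hγ0 hγ1 hμ0 hμ1 hπ0 hπ1 s
    have hsπt := summable_pDist P μ πt hP0 hP1 hγ0 hγ1 hμ0 hμ1 hπt0 hπt1 s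
    have : dvisit P μ γ π s - dvisit P μ γ πt s
        = (1 - γ) * ∑' t : ℕ, (γ ^ t * pDist P μ π t s - γ ^ t * pDist P μ πt t s) := by
      unfold dvisit
      rw [Summable.tsum_sub hsπ hsπt]; ring
    rw [this, abs_mul, abs_of_nonneg (by linarith : (0:ℝ) ≤ 1 - γ)]
    refine mul_le_mul_of_nonneg_left ?_ (by linarith)
    have hsum : Summable (fun t : ℕ => γ ^ t * |pDist P μ π t s - pDist P μ πt t s|) := by
      apply summable_geom_bound hγ0.le hγ1 (C := 2)
      intro t
      rw [abs_mul, abs_of_nonneg (by positivity), abs_abs]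
      have h1 : |pDist P μ π t s - pDist P μ πt t s| ≤ 2 := by
        refine (abs_sub _ _).trans ?_
        rw [abs_of_nonneg (pDist_nonneg P μ π hP0 hμ0 hπ0 t s),
          abs_of_nonneg (pDist_nonneg P μ πt hP0 hμ0 hπt0 t s)]
        have := pDist_le_one P μ π hP0 hP1 hμ0 hμ1 hπ0 hπ1 t s
        have := pDist_le_one P μ πt hP0 hP1 hμ0 hμ1 hπt0 hπt1 t s
        linarith
      nlinarith [pow_nonneg hγ0.le t, abs_nonneg (pDist P μ π t s - pDist P μ πt t s)]
    have h2 : Summable (fun t : ℕ => |γ ^ t * pDist P μ π t s - γ ^ t * pDist P μ πt t s|) := by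
      apply (hsπ.sub hsπt).abs
    calc |∑' t : ℕ, (γ ^ t * pDist P μ π t s - γ ^ t * pDist P μ πt t s)|
        ≤ ∑' t : ℕ, |γ ^ t * pDist P μ π t s - γ ^ t * pDist P μ πt t s| := by
          simpa using norm_tsum_le_tsum_norm (f := fun t : ℕ =>
            γ ^ t * pDist P μ π t s - γ ^ t * pDist P μ πt t s) (by simpa using h2)
      _ = ∑' t : ℕ, γ ^ t * |pDist P μ π t s - pDist P μ πt t s| := by
          refine tsum_congr fun t => ?_
          rw [← mul_sub, abs_mul, abs_of_nonneg (by positivity : (0:ℝ) ≤ γ ^ t)]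
  have hsumabs : ∀ s, Summable (fun t : ℕ => γ ^ t * |pDist P μ π t s - pDist P μ πt t s|) := by
    intro s
    apply summable_geom_bound hγ0.le hγ1 (C := 2)
    intro t
    rw [abs_mul, abs_of_nonneg (by positivity), abs_abs]
    have h1 : |pDist P μ π t s - pDist P μ πt t s| ≤ 2 := by
      refine (abs_sub _ _).trans ?_
      rw [abs_of_nonneg (pDist_nonneg P μ π hP0 hμ0 hπ0 t s),
        abs_of_nonneg (pDist_nonneg P μ πt hP0 hμ0 hπt0 t s)]
      have := pDist_le_one P μ π hP0 hP1 hμ0 hμ1 hπ0 hπ1 t s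
      have := pDist_le_one P μ πt hP0 hP1 hμ0 hμ1 hπt0 hπt1 t s
      linarith
    nlinarith [pow_nonneg hγ0.le t, abs_nonneg (pDist P μ π t s - pDist P μ πt t s)]
  have hLHS : ∑ s, |dvisit P μ γ π s - dvisit P μ γ πt s| ≤ (1 - γ) * ∑' t : ℕ, γ ^ t * Δ t := by
    calc ∑ s, |dvisit P μ γ π s - dvisit P μ γ πt s|
        ≤ ∑ s, (1 - γ) * ∑' t : ℕ, γ ^ t * |pDist P μ π t s - pDist P μ πt t s| :=
          Finset.sum_le_sum fun s _ => habs s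
      _ = (1 - γ) * ∑ s, ∑' t : ℕ, γ ^ t * |pDist P μ π t s - pDist P μ πt t s| := by
          rw [Finset.mul_sum]
      _ = (1 - γ) * ∑' t : ℕ, γ ^ t * Δ t := by
          congr 1
          rw [← Summable.tsum_finsetSum (fun s _ => hsumabs s)]
          refine tsum_congr fun t => ?_
          rw [hΔdef, Finset.mul_sum]
  have hRHS : ∑ s, dvisit P μ γ πt s * ∑ a, |π s a - πt s a| = (1 - γ) * ∑' t : ℕ, γ ^ t * ε t := by
    have hsmul : ∀ s : S, Summable (fun t : ℕ =>
        γ ^ t * pDist P μ πt t s * ∑ a, |π s a - πt s a|) := by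
      intro s
      exact (summable_pDist P μ πt hP0 hP1 hγ0 hγ1 hμ0 hμ1 hπt0 hπt1 s).mul_right _
    calc ∑ s, dvisit P μ γ πt s * ∑ a, |π s a - πt s a|
        = (1 - γ) * ∑ s, ∑' t : ℕ, γ ^ t * pDist P μ πt t s * ∑ a, |π s a - πt s a| := by
          rw [Finset.mul_sum]
          refine Finset.sum_congr rfl fun s _ => ?_
          unfold dvisit
          rw [mul_assoc, ← tsum_mul_right]
      _ = (1 - γ) * ∑' t : ℕ, γ ^ t * ε t := by
          congr 1
          rw [← Summable.tsum_finsetSum (fun s _ => hsmul s)]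
          refine tsum_congr fun t => ?_
          rw [hεdef, Finset.mul_sum]
          exact Finset.sum_congr rfl fun s _ => by ring
  rw [hRHS]
  have hγne : (1 - γ) ≠ 0 := by linarith
  calc ∑ s, |dvisit P μ γ π s - dvisit P μ γ πt s|
      ≤ (1 - γ) * ∑' t : ℕ, γ ^ t * Δ t := hLHS
    _ ≤ γ * ∑' t : ℕ, γ ^ t * ε t := key
    _ = γ * (1 - γ)⁻¹ * ((1 - γ) * ∑' t : ℕ, γ ^ t * ε t) := by
        field_simp

end diffbound

open Real in
lemma log_sum_ineq {X : Type*} [DecidableEq X] (B : Finset X) (p q : X → ℝ)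
    (hp : ∀ x ∈ B, 0 < p x) (hq : ∀ x ∈ B, 0 < q x) :
    (∑ x ∈ B, p x) * Real.log ((∑ x ∈ B, p x) / (∑ x ∈ B, q x)) ≤
      ∑ x ∈ B, p x * Real.log (p x / q x) := by
  rcases B.eq_empty_or_nonempty with rfl | hB
  · simp
  have hqs : 0 < ∑ x ∈ B, q x := Finset.sum_pos hq hB
  have hps : 0 < ∑ x ∈ B, p x := Finset.sum_pos hp hB
  have hJ := Real.convexOn_mul_log.map_centerMass_le (t := B) (w := q) (p := fun x => p x / q x)
    (fun x hx => (hq x hx).le) hqs (fun x hx => Set.mem_Ici.2 (div_nonneg (hp x hx).le (hq x hx).le))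
  have hcm : B.centerMass q (fun x => p x / q x) = (∑ x ∈ B, p x) / (∑ x ∈ B, q x) := by
    rw [Finset.centerMass, smul_eq_mul]
    rw [div_eq_inv_mul]
    congr 1
    refine Finset.sum_congr rfl fun x hx => ?_
    rw [smul_eq_mul, ← mul_div_assoc, mul_div_cancel_left₀ _ (hq x hx).ne']
  have hcm2 : B.centerMass q ((fun x => x * Real.log x) ∘ fun x => p x / q x)
      = (∑ x ∈ B, q x)⁻¹ * ∑ x ∈ B, p x * Real.log (p x / q x) := by
    rw [Finset.centerMass, smul_eq_mul]
    congr 1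
    refine Finset.sum_congr rfl fun x hx => ?_
    rw [smul_eq_mul, Function.comp_apply,
      show q x * (p x / q x * Real.log (p x / q x))
        = (q x * (p x / q x)) * Real.log (p x / q x) from by ring,
      ← mul_div_assoc, mul_div_cancel_left₀ _ (hq x hx).ne']
  rw [hcm, hcm2] at hJ
  have := mul_le_mul_of_nonneg_left hJ hqs.le
  calc (∑ x ∈ B, p x) * Real.log ((∑ x ∈ B, p x) / (∑ x ∈ B, q x))
      = (∑ x ∈ B, q x) * ((∑ x ∈ B, p x) / (∑ x ∈ B, q x) *
          Real.log ((∑ x ∈ B, p x) / (∑ x ∈ B, q x))) := by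
        field_simp
      _ ≤ (∑ x ∈ B, q x) * ((∑ x ∈ B, q x)⁻¹ * ∑ x ∈ B, p x * Real.log (p x / q x)) := this
      _ = ∑ x ∈ B, p x * Real.log (p x / q x) := by field_simp

open Real in
lemma binary_pinsker {α β : ℝ} (hα0 : 0 < α) (hα1 : α < 1) (hβ0 : 0 < β) (hβ1 : β < 1) :
    2 * (α - β) ^ 2 ≤ α * Real.log (α / β) + (1 - α) * Real.log ((1 - α) / (1 - β)) := by
  set h : ℝ → ℝ := fun x => α * Real.log α - α * Real.log x + (1 - α) * Real.log (1 - α)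
    - (1 - α) * Real.log (1 - x) - 2 * (α - x) ^ 2 with hh
  have hval : ∀ x, 0 < x → x < 1 →
      h x = α * Real.log (α / x) + (1 - α) * Real.log ((1 - α) / (1 - x)) - 2 * (α - x) ^ 2 := by
    intro x hx0 hx1
    rw [hh]
    rw [Real.log_div hα0.ne' hx0.ne', Real.log_div (by linarith : (1:ℝ) - α ≠ 0) (by linarith : (1:ℝ) - x ≠ 0)]
    ring
  have hderiv : ∀ x ∈ Set.Ioo (0:ℝ) 1,
      HasDerivAt h ((x - α) * (1 - 2*x)^2 / (x * (1 - x))) x := by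
    intro x hx
    obtain ⟨hx0, hx1⟩ := hx
    have h1 : HasDerivAt (fun x : ℝ => Real.log x) x⁻¹ x := Real.hasDerivAt_log hx0.ne'
    have h2 : HasDerivAt (fun x : ℝ => (1:ℝ) - x) (-1) x := (hasDerivAt_id x).const_sub 1
    have h3 : HasDerivAt (fun x : ℝ => Real.log (1 - x)) ((1 - x)⁻¹ * (-1)) x :=
      (Real.hasDerivAt_log (by linarith)).comp x h2
    have h4 : HasDerivAt (fun x : ℝ => (α - x) ^ 2) (2 * (α - x) ^ 1 * (-1)) x :=
      (((hasDerivAt_id x).const_sub α)).pow 2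
    have h5 : HasDerivAt h
        (0 - α * x⁻¹ + 0 - (1 - α) * ((1 - x)⁻¹ * (-1)) - 2 * (2 * (α - x) ^ 1 * (-1))) x := by
      exact ((((hasDerivAt_const x (α * Real.log α)).sub (h1.const_mul α)).add
        (hasDerivAt_const x ((1 - α) * Real.log (1 - α)))).sub (h3.const_mul (1 - α))).sub
        (h4.const_mul 2)
    convert h5 using 1
    field_simp [hx0.ne', (by linarith : (1:ℝ) - x ≠ 0)]
    ring
  have hcont : ContinuousOn h (Set.Ioo (0:ℝ) 1) := by
    intro x hx
    exact ((hderiv x hx).continuousAt).continuousWithinAt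
  have key : ∀ x, 0 < x → x < 1 → 0 ≤ h x := by
    intro x hx0 hx1
    have hhα : h α = 0 := by rw [hh]; ring_nf
    rcases le_or_gt x α with hxa | hxa
    · -- h antitone on [x, α]
      have hsub : Set.Icc x α ⊆ Set.Ioo (0:ℝ) 1 := fun y hy =>
        ⟨lt_of_lt_of_le hx0 hy.1, lt_of_le_of_lt hy.2 hα1⟩
      have hanti : AntitoneOn h (Set.Icc x α) := by
        apply antitoneOn_of_deriv_nonpos (convex_Icc x α) (hcont.mono hsub)
        · intro y hy
          rw [interior_Icc] at hy
          exact ((hderiv y (hsub (Set.Ioo_subset_Icc_self hy))).differentiableAt).differentiableWithinAt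
        · intro y hy
          rw [interior_Icc] at hy
          have hy' := hsub (Set.Ioo_subset_Icc_self hy)
          rw [(hderiv y hy').deriv]
          apply div_nonpos_of_nonpos_of_nonneg
          · nlinarith [sq_nonneg (1 - 2*y), hy.2]
          · nlinarith [hy'.1, hy'.2]
      have := hanti (Set.left_mem_Icc.2 hxa) (Set.right_mem_Icc.2 hxa) hxa
      rw [hhα] at this; exact this
    · -- h monotone on [α, x]
      have hsub : Set.Icc α x ⊆ Set.Ioo (0:ℝ) 1 := fun y hy =>
        ⟨lt_of_lt_of_le hα0 hy.1, lt_of_le_of_lt hy.2 hx1⟩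
      have hmono : MonotoneOn h (Set.Icc α x) := by
        apply monotoneOn_of_deriv_nonneg (convex_Icc α x) (hcont.mono hsub)
        · intro y hy
          rw [interior_Icc] at hy
          exact ((hderiv y (hsub (Set.Ioo_subset_Icc_self hy))).differentiableAt).differentiableWithinAt
        · intro y hy
          rw [interior_Icc] at hy
          have hy' := hsub (Set.Ioo_subset_Icc_self hy)
          rw [(hderiv y hy').deriv]
          apply div_nonneg
          · nlinarith [sq_nonneg (1 - 2*y), hy.1]
          · nlinarith [hy'.1, hy'.2]
      have := hmono (Set.left_mem_Icc.2 hxa.le) (Set.right_mem_Icc.2 hxa.le) hxa.le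
      rw [hhα] at this; exact this
  have := key β hβ0 hβ1
  rw [hval β hβ0 hβ1] at this
  linarith

lemma pinsker {A : Type*} [Fintype A] [Nonempty A] (p q : A → ℝ)
    (hp : ∀ a, 0 < p a) (hq : ∀ a, 0 < q a)
    (hp1 : ∑ a, p a = 1) (hq1 : ∑ a, q a = 1) :
    ∑ a, |p a - q a| ≤ Real.sqrt (2 * KL p q) := by
  classical
  set B : Finset A := Finset.univ.filter (fun a => q a < p a) with hB
  set α := ∑ a ∈ B, p a with hα
  set β := ∑ a ∈ B, q a with hβ
  have hcomp_p : ∑ a ∈ Bᶜ, p a = 1 - α := by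
    rw [hα, eq_sub_iff_add_eq, add_comm, Finset.sum_add_sum_compl, hp1]
  have hcomp_q : ∑ a ∈ Bᶜ, q a = 1 - β := by
    rw [hβ, eq_sub_iff_add_eq, add_comm, Finset.sum_add_sum_compl, hq1]
  have hLHS : ∑ a, |p a - q a| = 2 * (α - β) := by
    rw [← Finset.sum_add_sum_compl B]
    have h1 : ∑ a ∈ B, |p a - q a| = α - β := by
      rw [hα, hβ, ← Finset.sum_sub_distrib]
      refine Finset.sum_congr rfl fun a ha => ?_
      rw [abs_of_nonneg]
      have : q a < p a := (Finset.mem_filter.1 ha).2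
      linarith
    have h2 : ∑ a ∈ Bᶜ, |p a - q a| = (1 - β) - (1 - α) := by
      rw [← hcomp_p, ← hcomp_q, ← Finset.sum_sub_distrib]
      refine Finset.sum_congr rfl fun a ha => ?_
      rw [abs_of_nonpos]
      · ring
      have : ¬ q a < p a := by
        have := Finset.mem_compl.1 ha
        simpa [hB] using this
      linarith
    rw [h1, h2]; ring
  rcases B.eq_empty_or_nonempty with hBe | hBne
  · rw [hLHS, hα, hβ, hBe]
    simp [Real.sqrt_nonneg]
  have hBc : Bᶜ.Nonempty := by
    by_contra hc
    rw [Finset.not_nonempty_iff_eq_empty, Finset.compl_eq_empty_iff] at hc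
    have : ∑ a, q a < ∑ a, p a := by
      apply Finset.sum_lt_sum_of_nonempty Finset.univ_nonempty
      intro a _
      have : a ∈ B := by rw [hc]; exact Finset.mem_univ a
      exact (Finset.mem_filter.1 this).2
    rw [hp1, hq1] at this
    exact lt_irrefl 1 this
  have hα0 : 0 < α := Finset.sum_pos (fun a _ => hp a) hBne
  have hβ0 : 0 < β := Finset.sum_pos (fun a _ => hq a) hBne
  have hα1 : α < 1 := by
    have : 0 < 1 - α := hcomp_p ▸ Finset.sum_pos (fun a _ => hp a) hBc
    linarith
  have hβ1 : β < 1 := by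
    have : 0 < 1 - β := hcomp_q ▸ Finset.sum_pos (fun a _ => hq a) hBc
    linarith
  have hKL : α * Real.log (α / β) + (1 - α) * Real.log ((1 - α) / (1 - β)) ≤ KL p q := by
    have l1 := log_sum_ineq B p q (fun a _ => hp a) (fun a _ => hq a)
    have l2 := log_sum_ineq Bᶜ p q (fun a _ => hp a) (fun a _ => hq a)
    rw [hcomp_p, hcomp_q] at l2
    unfold KL
    rw [← Finset.sum_add_sum_compl B (fun a => p a * Real.log (p a / q a))]
    exact add_le_add l1 l2
  have hbin := binary_pinsker hα0 hα1 hβ0 hβ1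
  have hαβ : 0 ≤ α - β := by
    have : β ≤ α := by
      rw [hα, hβ]
      exact Finset.sum_le_sum fun a ha => ((Finset.mem_filter.1 ha).2).le
    linarith
  rw [hLHS, show (2:ℝ) * (α - β) = Real.sqrt ((2 * (α - β))^2) from
    (Real.sqrt_sq (by linarith)).symm]
  apply Real.sqrt_le_sqrt
  nlinarith

lemma KL_nonneg {A : Type*} [Fintype A] (p q : A → ℝ)
    (hp : ∀ a, 0 < p a) (hq : ∀ a, 0 < q a)
    (hp1 : ∑ a, p a = 1) (hq1 : ∑ a, q a = 1) : 0 ≤ KL p q := by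
  classical
  have := log_sum_ineq Finset.univ p q (fun a _ => hp a) (fun a _ => hq a)
  rw [hp1, hq1] at this
  simpa [KL] using this

theorem stmt_13' {S A : Type*} [Fintype S] [Fintype A] [Nonempty S] [Nonempty A]
    (P : S → A → S → ℝ)
    (hP0 : ∀ s a s', 0 ≤ P s a s') (hP1 : ∀ s a, ∑ s', P s a s' = 1)
    (γ : ℝ) (hγ0 : 0 < γ) (hγ1 : γ < 1)
    (μ : S → ℝ) (hμ0 : ∀ s, 0 ≤ μ s) (hμ1 : ∑ s, μ s = 1)
    (π πt : S → A → ℝ)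
    (hπ0 : ∀ s a, 0 < π s a) (hπ1 : ∀ s, ∑ a, π s a = 1)
    (hπt0 : ∀ s a, 0 < πt s a) (hπt1 : ∀ s, ∑ a, πt s a = 1)
    (g : S → A → ℝ) :
    ∑ s, dvisit P μ γ π s * ∑ a, π s a * g s a ≤
      (∑ s, dvisit P μ γ πt s * ∑ a, π s a * g s a) +
        Real.sqrt 2 * γ * (1 - γ)⁻¹ * (⨆ s, ⨆ a, |g s a|) *
          Real.sqrt (∑ s, dvisit P μ γ πt s * KL (π s) (πt s)) := by
  have hπ0' : ∀ s a, 0 ≤ π s a := fun s a => (hπ0 s a).le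
  have hπt0' : ∀ s a, 0 ≤ πt s a := fun s a => (hπt0 s a).le
  set M := ⨆ s, ⨆ a, |g s a| with hM
  have hMle : ∀ s a, |g s a| ≤ M := by
    intro s a
    have h1 : |g s a| ≤ ⨆ a, |g s a| :=
      le_ciSup (f := fun a => |g s a|) (Set.Finite.bddAbove (Set.finite_range _)) a
    exact h1.trans (le_ciSup (f := fun s => ⨆ a, |g s a|)
      (Set.Finite.bddAbove (Set.finite_range _)) s)
  have hM0 : 0 ≤ M := le_trans (abs_nonneg _) (hMle (Classical.arbitrary S) (Classical.arbitrary A))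
  set f : S → ℝ := fun s => ∑ a, π s a * g s a with hf
  have hfle : ∀ s, |f s| ≤ M := by
    intro s
    calc |f s| ≤ ∑ a, |π s a * g s a| := Finset.abs_sum_le_sum_abs _ _
      _ = ∑ a, π s a * |g s a| := by
          refine Finset.sum_congr rfl fun a _ => ?_
          rw [abs_mul, abs_of_nonneg (hπ0' s a)]
      _ ≤ ∑ a, π s a * M :=
          Finset.sum_le_sum fun a _ => mul_le_mul_of_nonneg_left (hMle s a) (hπ0' s a)
      _ = M := by rw [← Finset.sum_mul, hπ1, one_mul]
  have hdiff := dvisit_diff_bound P μ π πt hP0 hP1 hγ0 hγ1 hμ0 hμ1 hπ0' hπ1 hπt0' hπt1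
  have hKLnn : ∀ s, 0 ≤ KL (π s) (πt s) := fun s =>
    KL_nonneg (π s) (πt s) (hπ0 s) (hπt0 s) (hπ1 s) (hπt1 s)
  have hdnn : ∀ s, 0 ≤ dvisit P μ γ πt s := fun s =>
    dvisit_nonneg P μ πt hP0 hγ0 hγ1 hμ0 hπt0' s
  -- Pinsker + Jensen step
  have hPJ : ∑ s, dvisit P μ γ πt s * ∑ a, |π s a - πt s a| ≤
      Real.sqrt 2 * Real.sqrt (∑ s, dvisit P μ γ πt s * KL (π s) (πt s)) := by
    calc ∑ s, dvisit P μ γ πt s * ∑ a, |π s a - πt s a|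
        ≤ ∑ s, dvisit P μ γ πt s * (Real.sqrt 2 * Real.sqrt (KL (π s) (πt s))) := by
          refine Finset.sum_le_sum fun s _ => mul_le_mul_of_nonneg_left ?_ (hdnn s)
          have := pinsker (π s) (πt s) (hπ0 s) (hπt0 s) (hπ1 s) (hπt1 s)
          rwa [Real.sqrt_mul (by norm_num) (KL (π s) (πt s))] at this
      _ = Real.sqrt 2 * ∑ s, dvisit P μ γ πt s * Real.sqrt (KL (π s) (πt s)) := by
          rw [Finset.mul_sum]
          exact Finset.sum_congr rfl fun s _ => by ring
      _ ≤ Real.sqrt 2 * Real.sqrt (∑ s, dvisit P μ γ πt s * KL (π s) (πt s)) := by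
          refine mul_le_mul_of_nonneg_left ?_ (Real.sqrt_nonneg 2)
          have hCS := Real.sum_sqrt_mul_sqrt_le (Finset.univ (α := S))
            (f := fun s => dvisit P μ γ πt s)
            (fun s => hdnn s)
            (g := fun s => dvisit P μ γ πt s * KL (π s) (πt s))
            (fun s => mul_nonneg (hdnn s) (hKLnn s))
          have heq : ∀ s : S, Real.sqrt (dvisit P μ γ πt s) *
              Real.sqrt (dvisit P μ γ πt s * KL (π s) (πt s))
              = dvisit P μ γ πt s * Real.sqrt (KL (π s) (πt s)) := by
            intro s
            rw [Real.sqrt_mul (hdnn s), ← mul_assoc, Real.mul_self_sqrt (hdnn s)]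
          rw [Finset.sum_congr rfl (fun s _ => heq s)] at hCS
          refine hCS.trans ?_
          rw [dvisit_sum P μ πt hP0 hP1 hγ0 hγ1 hμ0 hμ1 hπt0' hπt1]
          simp
  -- main difference bound
  have hmain : ∑ s, dvisit P μ γ π s * f s - ∑ s, dvisit P μ γ πt s * f s ≤
      M * ∑ s, |dvisit P μ γ π s - dvisit P μ γ πt s| := by
    rw [← Finset.sum_sub_distrib]
    calc ∑ s, (dvisit P μ γ π s * f s - dvisit P μ γ πt s * f s)
        ≤ ∑ s, |dvisit P μ γ π s - dvisit P μ γ πt s| * M := by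
          refine Finset.sum_le_sum fun s _ => ?_
          calc dvisit P μ γ π s * f s - dvisit P μ γ πt s * f s
              = (dvisit P μ γ π s - dvisit P μ γ πt s) * f s := by ring
            _ ≤ |(dvisit P μ γ π s - dvisit P μ γ πt s) * f s| := le_abs_self _
            _ = |dvisit P μ γ π s - dvisit P μ γ πt s| * |f s| := abs_mul _ _
            _ ≤ |dvisit P μ γ π s - dvisit P μ γ πt s| * M :=
                mul_le_mul_of_nonneg_left (hfle s) (abs_nonneg _)
      _ = M * ∑ s, |dvisit P μ γ π s - dvisit P μ γ πt s| := by
          rw [Finset.mul_sum]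
          exact Finset.sum_congr rfl fun s _ => mul_comm _ _
  have hfinal : ∑ s, dvisit P μ γ π s * f s - ∑ s, dvisit P μ γ πt s * f s ≤
      Real.sqrt 2 * γ * (1 - γ)⁻¹ * M *
        Real.sqrt (∑ s, dvisit P μ γ πt s * KL (π s) (πt s)) := by
    refine hmain.trans ?_
    have hc : 0 ≤ γ * (1 - γ)⁻¹ := mul_nonneg hγ0.le (inv_nonneg.2 (by linarith))
    calc M * ∑ s, |dvisit P μ γ π s - dvisit P μ γ πt s|
        ≤ M * (γ * (1 - γ)⁻¹ * ∑ s, dvisit P μ γ πt s * ∑ a, |π s a - πt s a|) :=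
          mul_le_mul_of_nonneg_left hdiff hM0
      _ ≤ M * (γ * (1 - γ)⁻¹ *
          (Real.sqrt 2 * Real.sqrt (∑ s, dvisit P μ γ πt s * KL (π s) (πt s)))) := by
          refine mul_le_mul_of_nonneg_left (mul_le_mul_of_nonneg_left hPJ hc) hM0
      _ = Real.sqrt 2 * γ * (1 - γ)⁻¹ * M *
          Real.sqrt (∑ s, dvisit P μ γ πt s * KL (π s) (πt s)) := by ring
  linarith

/-- **Distribution-shift bound for visitation expectations.** For any two
everywhere-positive policies `π, π̃` and any `g : S × A → ℝ`,
`∑_s d^π(s) ∑_a π(s,a) g(s,a) ≤ ∑_s d^{π̃}(s) ∑_a π(s,a) g(s,a)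
  + √2 γ (1−γ)⁻¹ (max_{s,a} |g(s,a)|) √(D^{π̃}_KL(π, π̃))`. -/
theorem stmt_13 {S A : Type*} [Fintype S] [Fintype A] [Nonempty S] [Nonempty A]
    (P : S → A → S → ℝ)
    (hP0 : ∀ s a s', 0 ≤ P s a s') (hP1 : ∀ s a, ∑ s', P s a s' = 1)
    (γ : ℝ) (hγ0 : 0 < γ) (hγ1 : γ < 1)
    (μ : S → ℝ) (hμ0 : ∀ s, 0 ≤ μ s) (hμ1 : ∑ s, μ s = 1)
    (π πt : S → A → ℝ)
    (hπ0 : ∀ s a, 0 < π s a) (hπ1 : ∀ s, ∑ a, π s a = 1)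
    (hπt0 : ∀ s a, 0 < πt s a) (hπt1 : ∀ s, ∑ a, πt s a = 1)
    (g : S → A → ℝ) :
    ∑ s, dvisit P μ γ π s * ∑ a, π s a * g s a ≤
      (∑ s, dvisit P μ γ πt s * ∑ a, π s a * g s a) +
        Real.sqrt 2 * γ * (1 - γ)⁻¹ * (⨆ s, ⨆ a, |g s a|) *
          Real.sqrt (∑ s, dvisit P μ γ πt s * KL (π s) (πt s)) := by
  exact stmt_13' P hP0 hP1 γ hγ0 hγ1 μ hμ0 hμ1 π πt hπ0 hπ1 hπt0 hπt1 g
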